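/- arXiv:2108.05261 — 2 statements merged into one kernel-verified Lean document; each statement's English description precedes it below -/
import Mathlib

section
/- For the distributed-order kernel k(t) = ∫₀¹ t^{α-1}/Γ(α) dα, the Laplace transform K(λ) = ∫₀^∞ e^{-λt} k(t) dt equals (λ-1)/(λ log λ) for all λ > 0, λ ≠ 1. -/
open MeasureTheory Real

private lemma aux_integrable_t {l a : ℝ} (hl : 0 < l) (ha : 0 < a) :
    IntegrableOn (fun t : ℝ => Real.exp (-l * t) * (t ^ (a - 1) / Real.Gamma a))
      (Set.Ioi 0) := by
  have h := integrableOn_rpow_mul_exp_neg_mul_rpow (s := a - 1) (p := 1) (b := l)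
    (by linarith) zero_lt_one hl
  simp only [Real.rpow_one] at h
  have h2 : IntegrableOn (fun t : ℝ => (Real.Gamma a)⁻¹ * (t ^ (a - 1) * Real.exp (-l * t)))
      (Set.Ioi 0) := h.const_mul (Real.Gamma a)⁻¹
  refine h2.congr_fun (fun t ht => ?_) measurableSet_Ioi
  simp only [div_eq_mul_inv]; ring

private lemma aux_integral_t {l a : ℝ} (hl : 0 < l) (ha : 0 < a) :
    ∫ t in Set.Ioi (0:ℝ), Real.exp (-l * t) * (t ^ (a - 1) / Real.Gamma a)
      = (1 / l) ^ a := by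
  have h := Real.integral_rpow_mul_exp_neg_mul_Ioi ha hl
  have hG : Real.Gamma a ≠ 0 := (Real.Gamma_pos_of_pos ha).ne'
  calc ∫ t in Set.Ioi (0:ℝ), Real.exp (-l * t) * (t ^ (a - 1) / Real.Gamma a)
      = (Real.Gamma a)⁻¹ * ∫ t in Set.Ioi (0:ℝ), t ^ (a - 1) * Real.exp (-(l * t)) := by
        rw [← MeasureTheory.integral_const_mul]
        refine setIntegral_congr_fun measurableSet_Ioi (fun t ht => ?_)
        rw [neg_mul]; ring
    _ = (1 / l) ^ a := by rw [h]; field_simp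

theorem distributed_order_kernel_laplace (l : ℝ) (hl : 0 < l) (hne : l ≠ 1) :
    ∫ t in Set.Ioi (0:ℝ),
        Real.exp (-l * t) * ∫ a in (0:ℝ)..1, t ^ (a - 1) / Real.Gamma a =
      (l - 1) / (l * Real.log l) := by
  have hlog : Real.log l ≠ 0 := by
    intro h
    rcases Real.log_eq_zero.mp h with h1 | h1 | h1 <;> [linarith; exact hne h1; linarith]
  set f : ℝ × ℝ → ℝ := fun p => Real.exp (-l * p.1) * (p.1 ^ (p.2 - 1) / Real.Gamma p.2)
    with hf
  -- continuity / measurability on the product set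
  have hcont : ContinuousOn f (Set.Ioi (0:ℝ) ×ˢ Set.Ioc (0:ℝ) 1) := by
    intro p hp
    obtain ⟨hp1, hp2⟩ := hp
    apply ContinuousAt.continuousWithinAt
    have hrpow : ContinuousAt (fun p : ℝ × ℝ => p.1 ^ (p.2 - 1)) p :=
      ContinuousAt.rpow continuousAt_fst (continuousAt_snd.sub continuousAt_const)
        (Or.inl (ne_of_gt hp1))
    have hGam : ContinuousAt (fun p : ℝ × ℝ => Real.Gamma p.2) p := by
      have : ContinuousAt Real.Gamma p.2 :=
        (Real.differentiableAt_Gamma (fun m =>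
          (lt_of_le_of_lt (neg_nonpos.mpr (by positivity : (0:ℝ) ≤ (m:ℝ))) hp2.1).ne')).continuousAt
      exact this.comp continuousAt_snd
    have hGne : Real.Gamma p.2 ≠ 0 := (Real.Gamma_pos_of_pos hp2.1).ne'
    exact ((Real.continuous_exp.comp (continuous_const.mul continuous_fst)).continuousAt).mul
      (hrpow.div hGam hGne)
  have hmeas : AEStronglyMeasurable f
      ((volume.restrict (Set.Ioi (0:ℝ))).prod (volume.restrict (Set.Ioc (0:ℝ) 1))) := by
    rw [Measure.prod_restrict]
    exact hcont.aestronglyMeasurable (measurableSet_Ioi.prod measurableSet_Ioc)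
  -- integrability on the product
  have hint : Integrable f
      ((volume.restrict (Set.Ioi (0:ℝ))).prod (volume.restrict (Set.Ioc (0:ℝ) 1))) := by
    rw [integrable_prod_iff' hmeas]
    constructor
    · filter_upwards [ae_restrict_mem measurableSet_Ioc] with a ha
      exact aux_integrable_t hl ha.1
    · have hcongr : ∀ᵐ a ∂(volume.restrict (Set.Ioc (0:ℝ) 1)),
          (∫ t in Set.Ioi (0:ℝ), ‖f (t, a)‖) = (1 / l) ^ a := by
        filter_upwards [ae_restrict_mem measurableSet_Ioc] with a ha
        have : ∀ t ∈ Set.Ioi (0:ℝ), ‖f (t, a)‖ = f (t, a) := by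
          intro t ht
          rw [Real.norm_eq_abs, abs_of_nonneg]
          exact mul_nonneg (Real.exp_pos _).le
            (div_nonneg (Real.rpow_nonneg (le_of_lt ht) _)
              (Real.Gamma_nonneg_of_nonneg ha.1.le))
        rw [setIntegral_congr_fun measurableSet_Ioi this]
        exact aux_integral_t hl ha.1
      refine (Integrable.congr ?_ (Filter.EventuallyEq.symm hcongr))
      have hc : Continuous fun a : ℝ => (1 / l) ^ a := by
        have h1l : (0:ℝ) < 1 / l := by positivity
        have : (fun a : ℝ => (1 / l) ^ a) = fun a => Real.exp (Real.log (1 / l) * a) := by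
          funext a; rw [Real.rpow_def_of_pos h1l]
        rw [this]; fun_prop
      exact (hc.integrableOn_Ioc)
  -- swap the integrals
  have hswap := MeasureTheory.integral_integral_swap (μ := volume.restrict (Set.Ioi (0:ℝ)))
    (ν := volume.restrict (Set.Ioc (0:ℝ) 1)) (f := fun t a => f (t, a)) hint
  calc ∫ t in Set.Ioi (0:ℝ),
        Real.exp (-l * t) * ∫ a in (0:ℝ)..1, t ^ (a - 1) / Real.Gamma a
      = ∫ t in Set.Ioi (0:ℝ), ∫ a in Set.Ioc (0:ℝ) 1, f (t, a) := by
        refine setIntegral_congr_fun measurableSet_Ioi (fun t ht => ?_)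
        rw [intervalIntegral.integral_of_le zero_le_one, ← MeasureTheory.integral_const_mul]
    _ = ∫ a in Set.Ioc (0:ℝ) 1, ∫ t in Set.Ioi (0:ℝ), f (t, a) := hswap
    _ = ∫ a in Set.Ioc (0:ℝ) 1, (1 / l) ^ a := by
        refine setIntegral_congr_fun measurableSet_Ioc (fun a ha => ?_)
        exact aux_integral_t hl ha.1
    _ = ∫ a in (0:ℝ)..1, Real.exp (a * (-Real.log l)) := by
        rw [intervalIntegral.integral_of_le zero_le_one]
        refine setIntegral_congr_fun measurableSet_Ioc (fun a ha => ?_)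
        rw [Real.rpow_def_of_pos (by positivity), Real.log_div one_ne_zero (ne_of_gt hl),
          Real.log_one]
        ring_nf
    _ = (l - 1) / (l * Real.log l) := by
        open intervalIntegral in
        rw [integral_comp_mul_right Real.exp (neg_ne_zero.mpr hlog)]
        open intervalIntegral in
        simp only [zero_mul, one_mul, smul_eq_mul, integral_exp]
        rw [Real.exp_neg, Real.exp_log hl, Real.exp_zero]
        field_simp
        ring
end

section
/- Under the dissipativity condition b(x)·(x - x₀) ≤ -c|x - x₀|², if f : ℝ^d → ℝ is β-Hölder with constant C (0 < β ≤ 1), then u(t,x) := f(X(t;x)) satisfies |u(t,x) - f(x₀)| ≤ C|x - x₀|^β e^{-cβt} for all t ≥ 0 and x ∈ ℝ^d. -/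
theorem holder_decay_of_solution {d : ℕ}
    (b : EuclideanSpace ℝ (Fin d) → EuclideanSpace ℝ (Fin d)) (hb : Continuous b)
    (x₀ : EuclideanSpace ℝ (Fin d)) (c : ℝ) (hc : 0 < c)
    (hdiss : ∀ x, (inner ℝ (b x) (x - x₀) : ℝ) ≤ -c * ‖x - x₀‖ ^ 2)
    (f : EuclideanSpace ℝ (Fin d) → ℝ) (C β : ℝ) (hC : 0 < C) (hβ0 : 0 < β) (hβ1 : β ≤ 1)
    (hf : ∀ x y, |f x - f y| ≤ C * ‖x - y‖ ^ β)
    (X : EuclideanSpace ℝ (Fin d) → ℝ → EuclideanSpace ℝ (Fin d))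
    (hX0 : ∀ x, X x 0 = x) (hflow : ∀ x t, HasDerivAt (X x) (b (X x t)) t) :
    ∀ t : ℝ, 0 ≤ t → ∀ x,
      |f (X x t) - f x₀| ≤ C * ‖x - x₀‖ ^ β * Real.exp (-c * β * t) := by
  intro t ht x
  -- h s = ‖X x s - x₀‖² * exp (2 c s)
  set u : ℝ → EuclideanSpace ℝ (Fin d) := fun s => X x s - x₀ with hu
  have hud : ∀ s, HasDerivAt u (b (X x s)) s := fun s => (hflow x s).sub_const x₀
  set h : ℝ → ℝ := fun s => (inner ℝ (u s) (u s) : ℝ) * Real.exp (2 * c * s) with hh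
  have hhd : ∀ s, HasDerivAt h
      (((inner ℝ (b (X x s)) (u s) : ℝ) + (inner ℝ (u s) (b (X x s)) : ℝ)) * Real.exp (2 * c * s)
        + (inner ℝ (u s) (u s) : ℝ) * (Real.exp (2 * c * s) * (2 * c))) s := by
    intro s
    have h1 : HasDerivAt (fun s => (inner ℝ (u s) (u s) : ℝ))
        ((inner ℝ (b (X x s)) (u s) : ℝ) + (inner ℝ (u s) (b (X x s)) : ℝ)) s := by
      simpa [add_comm] using (hud s).inner ℝ (hud s)
    have h2 : HasDerivAt (fun s => Real.exp (2 * c * s)) (Real.exp (2 * c * s) * (2 * c)) s := by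
      have := ((hasDerivAt_id s).const_mul (2 * c)).exp
      simpa [mul_comm] using this
    exact h1.mul h2
  have hderiv_nonpos : ∀ s, deriv h s ≤ 0 := by
    intro s
    rw [(hhd s).deriv]
    have key : (inner ℝ (b (X x s)) (u s) : ℝ) ≤ -c * ‖u s‖ ^ 2 := hdiss (X x s)
    have hsym : (inner ℝ (u s) (b (X x s)) : ℝ) = (inner ℝ (b (X x s)) (u s) : ℝ) :=
      real_inner_comm _ _
    have hns : (inner ℝ (u s) (u s) : ℝ) = ‖u s‖ ^ 2 := real_inner_self_eq_norm_sq _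
    rw [hsym, hns]
    have hexp : (0:ℝ) < Real.exp (2 * c * s) := Real.exp_pos _
    nlinarith [sq_nonneg ‖u s‖]
  have hanti : Antitone h :=
    antitone_of_deriv_nonpos (fun s => (hhd s).differentiableAt) hderiv_nonpos
  have hle : h t ≤ h 0 := hanti ht
  have h0 : h 0 = ‖x - x₀‖ ^ 2 := by
    have hu0 : u 0 = x - x₀ := by simp [hu, hX0]
    simp only [hh, hu0, real_inner_self_eq_norm_sq, mul_zero, Real.exp_zero, mul_one]
  have hnorm2 : ‖u t‖ ^ 2 ≤ (‖x - x₀‖ * Real.exp (-c * t)) ^ 2 := by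
    have hns : (inner ℝ (u t) (u t) : ℝ) = ‖u t‖ ^ 2 := real_inner_self_eq_norm_sq _
    have hexp : (0:ℝ) < Real.exp (2 * c * t) := Real.exp_pos _
    have : ‖u t‖ ^ 2 * Real.exp (2 * c * t) ≤ ‖x - x₀‖ ^ 2 := by
      rw [h0] at hle
      simp only [hh, real_inner_self_eq_norm_sq] at hle
      exact hle
    have he : (‖x - x₀‖ * Real.exp (-c * t)) ^ 2
        = ‖x - x₀‖ ^ 2 * Real.exp (-(2 * c * t)) := by
      rw [mul_pow, ← Real.exp_nat_mul]; ring_nf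
    rw [he, Real.exp_neg, ← div_eq_mul_inv, le_div_iff₀ hexp]
    exact this
  have hnorm : ‖u t‖ ≤ ‖x - x₀‖ * Real.exp (-c * t) := by
    have h2 : (0:ℝ) ≤ ‖x - x₀‖ * Real.exp (-c * t) :=
      mul_nonneg (norm_nonneg _) (Real.exp_pos _).le
    nlinarith [norm_nonneg (u t)]
  calc |f (X x t) - f x₀| ≤ C * ‖X x t - x₀‖ ^ β := hf _ _
    _ ≤ C * (‖x - x₀‖ * Real.exp (-c * t)) ^ β := by
        gcongr
    _ = C * ‖x - x₀‖ ^ β * Real.exp (-c * β * t) := by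
        rw [Real.mul_rpow (norm_nonneg _) (Real.exp_pos _).le, ← Real.exp_mul]
        ring_nf
end
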